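/- arXiv:1710.10572 — 2 statements merged into one kernel-verified Lean document; each statement's English description precedes it below -/
import Mathlib

section
/- For every natural number s ≥ 1, in ℤ[y,y⁻¹,z,z⁻¹][[q]] one has ∏_{ε₁,ε₂∈{±1}}(1 − q y^{ε₁} z^{ε₂}) · ∑_{σ=0}^{∞} q^σ χ_{2s+σ}(y) χ_σ(z) = χ_{2s}(y) − q χ_{2s−1}(y) χ_1(z) + q² χ_{2s−2}(y). (This is the character identity expressing that the chiral spin-s so(2,4) singleton D(s+1;(s,s)) decomposes as the multiplicity-free sum ⊕_{σ≥0} D_{so(2)⊕so(4)}(s+1+σ;(s+σ,s)).) -/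
/-- The two-variable Laurent polynomial ring ℤ[y,y⁻¹,z,z⁻¹], realised as
Laurent polynomials in `z` over Laurent polynomials in `y`. -/
noncomputable abbrev L2 : Type := LaurentPolynomial (LaurentPolynomial ℤ)

/-- The su(2) character `χ_n(y) = ∑_{k=0}^n y^{n-2k}`, in the variable `y`. -/
noncomputable def chiY (n : ℕ) : L2 :=
  LaurentPolynomial.C (∑ k ∈ Finset.range (n + 1), LaurentPolynomial.T ((n : ℤ) - 2 * k))

/-- The su(2) character `χ_n(z) = ∑_{k=0}^n z^{n-2k}`, in the variable `z`. -/
noncomputable def chiZv (n : ℕ) : L2 :=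
  ∑ k ∈ Finset.range (n + 1), LaurentPolynomial.T ((n : ℤ) - 2 * k)

/-- `y^{ε₁} z^{ε₂}` as an element of ℤ[y,y⁻¹,z,z⁻¹]. -/
noncomputable def yz (e₁ e₂ : ℤ) : L2 :=
  LaurentPolynomial.C (LaurentPolynomial.T e₁) * LaurentPolynomial.T e₂

/-- `∏_{ε₁,ε₂∈{±1}} (1 - q y^{ε₁} z^{ε₂})`, the inverse of the universal AdS₅
function `P₄(q,y,z)`, in ℤ[y,y⁻¹,z,z⁻¹][[q]]. -/
noncomputable def P4inv : PowerSeries L2 :=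
  (1 - PowerSeries.C (yz 1 1) * PowerSeries.X) *
  (1 - PowerSeries.C (yz 1 (-1)) * PowerSeries.X) *
  (1 - PowerSeries.C (yz (-1) 1) * PowerSeries.X) *
  (1 - PowerSeries.C (yz (-1) (-1)) * PowerSeries.X)

section Aux
open LaurentPolynomial Finset
variable {R : Type*} [CommRing R]

noncomputable def ch (R : Type*) [CommRing R] (n : ℕ) : LaurentPolynomial R :=
  ∑ k ∈ Finset.range (n + 1), LaurentPolynomial.T ((n : ℤ) - 2 * k)

variable {R : Type*} [CommRing R]

lemma ch_zero : ch R 0 = 1 := by simp [ch]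

lemma ch_one : ch R 1 = T 1 + T (-1) := by
  simp [ch, Finset.sum_range_succ]

lemma ch_succ (n : ℕ) : ch R (n + 1) = T ((n : ℤ) + 1) + T (-1) * ch R n := by
  rw [ch, Finset.sum_range_succ']
  push_cast
  rw [ch, Finset.mul_sum]
  rw [add_comm]
  congr 1
  · apply Finset.sum_congr rfl
    intro k _
    rw [← T_add]
    ring_nf

lemma ch_one_mul (n : ℕ) : ch R 1 * ch R (n + 1) = ch R (n + 2) + ch R n := by
  induction n with
  | zero =>
      rw [ch_one]
      show _ = ch R 2 + ch R 0
      rw [ch_zero]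
      simp [ch, Finset.sum_range_succ, ← T_add]
      ring_nf
      rw [← T_add]
      norm_num
  | succ m ih =>
      rw [ch_succ (m+1), mul_add, ← mul_assoc, mul_comm (ch R 1) (T (-1)), mul_assoc,
        ih, ch_one]
      push_cast
      rw [ch_succ (m+2), ch_succ m]
      push_cast
      rw [add_mul, ← T_add, ← T_add]
      ring_nf

lemma chiY_eq (n : ℕ) : chiY n = LaurentPolynomial.C (ch ℤ n) := rfl
lemma chiZv_eq (n : ℕ) : chiZv n = ch (LaurentPolynomial ℤ) n := rfl

lemma chiZv_zero : chiZv 0 = 1 := by rw [chiZv_eq, ch_zero]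
lemma chiY_zero : chiY 0 = 1 := by rw [chiY_eq, ch_zero, map_one]

lemma chiY_one_mul (n : ℕ) : chiY 1 * chiY (n + 1) = chiY (n + 2) + chiY n := by
  simp only [chiY_eq, ← map_mul, ← map_add, ch_one_mul]

lemma chiZv_one_mul (n : ℕ) : chiZv 1 * chiZv (n + 1) = chiZv (n + 2) + chiZv n := by
  simp only [chiZv_eq, ch_one_mul]


lemma hp2 : (LaurentPolynomial.C (T 1) : L2) * LaurentPolynomial.C (T (-1)) = 1 := by
  rw [← map_mul, ← T_add]
  norm_num

lemma hq2 : (T 1 : L2) * T (-1) = 1 := by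
  rw [← T_add]
  norm_num

lemma chiY_one : chiY 1 = LaurentPolynomial.C (T 1) + LaurentPolynomial.C (T (-1)) := by
  rw [chiY_eq, ch_one, map_add]

lemma chiZv_one : chiZv 1 = T 1 + T (-1) := by rw [chiZv_eq, ch_one]

set_option maxHeartbeats 1000000 in
lemma P4inv_eq : P4inv =
    PowerSeries.C 1
    - PowerSeries.C (chiY 1 * chiZv 1) * PowerSeries.X ^ 1
    + PowerSeries.C (chiY 1 * chiY 1 + chiZv 1 * chiZv 1 - 2) * PowerSeries.X ^ 2
    - PowerSeries.C (chiY 1 * chiZv 1) * PowerSeries.X ^ 3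
    + PowerSeries.C 1 * PowerSeries.X ^ 4 := by
  have e1 : yz 1 1 + yz 1 (-1) + yz (-1) 1 + yz (-1) (-1) = chiY 1 * chiZv 1 := by
    simp only [yz, chiY_one, chiZv_one]; ring
  have e2 : yz 1 1 * yz 1 (-1) + yz 1 1 * yz (-1) 1 + yz 1 1 * yz (-1) (-1)
      + yz 1 (-1) * yz (-1) 1 + yz 1 (-1) * yz (-1) (-1) + yz (-1) 1 * yz (-1) (-1)
      = chiY 1 * chiY 1 + chiZv 1 * chiZv 1 - 2 := by
    simp only [yz, chiY_one, chiZv_one]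
    linear_combination (LaurentPolynomial.C (T 1)^2 + LaurentPolynomial.C (T (-1))^2 + 2*(LaurentPolynomial.C (T 1)*LaurentPolynomial.C (T (-1))-1)) * hq2 + ((T 1 : L2)^2 + T (-1)^2) * hp2
  have e3 : yz 1 1 * yz 1 (-1) * yz (-1) 1 + yz 1 1 * yz 1 (-1) * yz (-1) (-1)
      + yz 1 1 * (yz (-1) 1 * yz (-1) (-1)) + yz 1 (-1) * (yz (-1) 1 * yz (-1) (-1))
      = chiY 1 * chiZv 1 := by
    simp only [yz, chiY_one, chiZv_one]
    linear_combination (LaurentPolynomial.C (T 1) * LaurentPolynomial.C (T (-1)) * ((LaurentPolynomial.C (T 1) + LaurentPolynomial.C (T (-1))) * ((T 1 : L2) + T (-1)))) * hq2 + ((LaurentPolynomial.C (T 1) + LaurentPolynomial.C (T (-1))) * ((T 1 : L2) + T (-1))) * hp2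
  have e4 : yz 1 1 * yz 1 (-1) * (yz (-1) 1 * yz (-1) (-1)) = 1 := by
    simp only [yz]
    linear_combination (LaurentPolynomial.C (T 1) * LaurentPolynomial.C (T (-1)) * (LaurentPolynomial.C (T 1)*LaurentPolynomial.C (T (-1))*(T 1 : L2)*T (-1) + 1)) * hq2 + (LaurentPolynomial.C (T 1)*LaurentPolynomial.C (T (-1))*(T 1 : L2)*T (-1) + 1) * hp2
  have vieta : P4inv =
      PowerSeries.C 1
      - PowerSeries.C (yz 1 1 + yz 1 (-1) + yz (-1) 1 + yz (-1) (-1)) * PowerSeries.X ^ 1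
      + PowerSeries.C (yz 1 1 * yz 1 (-1) + yz 1 1 * yz (-1) 1 + yz 1 1 * yz (-1) (-1)
          + yz 1 (-1) * yz (-1) 1 + yz 1 (-1) * yz (-1) (-1) + yz (-1) 1 * yz (-1) (-1))
        * PowerSeries.X ^ 2
      - PowerSeries.C (yz 1 1 * yz 1 (-1) * yz (-1) 1 + yz 1 1 * yz 1 (-1) * yz (-1) (-1)
          + yz 1 1 * (yz (-1) 1 * yz (-1) (-1)) + yz 1 (-1) * (yz (-1) 1 * yz (-1) (-1)))
        * PowerSeries.X ^ 3
      + PowerSeries.C (yz 1 1 * yz 1 (-1) * (yz (-1) 1 * yz (-1) (-1)))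
        * PowerSeries.X ^ 4 := by
    simp only [P4inv, map_add, map_mul, map_one, map_sub, map_ofNat]
    ring
  rw [vieta, e2, e3, e4, e1]

lemma coeff_term (b : L2) (f : PowerSeries L2) (j n : ℕ) :
    PowerSeries.coeff n (PowerSeries.C b * PowerSeries.X ^ j * f) =
      if j ≤ n then b * PowerSeries.coeff (n - j) f else 0 := by
  rw [mul_right_comm, PowerSeries.coeff_mul_X_pow']
  split
  · rw [PowerSeries.coeff_C_mul]
  · rfl

lemma chiY_one_mul' (a b c : ℕ) (h1 : b = a + 1) (h2 : c = a + 2) :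
    chiY 1 * chiY b = chiY c + chiY a := by
  subst h1; subst h2; exact chiY_one_mul a

lemma chiZv_one_mul' (a b c : ℕ) (h1 : b = a + 1) (h2 : c = a + 2) :
    chiZv 1 * chiZv b = chiZv c + chiZv a := by
  subst h1; subst h2; exact chiZv_one_mul a

end Aux

/-- Character identity expressing that the chiral spin-s so(2,4) singleton `D(s+1;(s,s)₊)`
decomposes multiplicity-free as `⊕_{σ≥0} D_{so(2)⊕so(4)}(s+1+σ;(s+σ,s))`:
`P₄⁻¹ · ∑_{σ≥0} q^σ χ_{2s+σ}(y)χ_σ(z) = χ_{2s}(y) - q χ_{2s-1}(y)χ₁(z) + q² χ_{2s-2}(y)`. -/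
theorem chiral_singleton_decomposition (s : ℕ) (hs : 1 ≤ s) :
    P4inv * PowerSeries.mk (fun σ => chiY (2 * s + σ) * chiZv σ) =
    PowerSeries.C (chiY (2 * s)) -
      PowerSeries.C (chiY (2 * s - 1) * chiZv 1) * PowerSeries.X +
      PowerSeries.C (chiY (2 * s - 2)) * PowerSeries.X ^ 2 := by
  obtain ⟨t, rfl⟩ : ∃ t, s = t + 1 := ⟨s - 1, by omega⟩
  rw [P4inv_eq, add_mul, sub_mul, add_mul, sub_mul]
  set b2 : L2 := chiY 1 * chiY 1 + chiZv 1 * chiZv 1 - 2 with hb2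
  refine PowerSeries.ext fun n => ?_
  simp only [map_add, map_sub, coeff_term, PowerSeries.coeff_C_mul, PowerSeries.coeff_mk,
    PowerSeries.coeff_C, PowerSeries.coeff_X, PowerSeries.coeff_X_pow, one_mul]
  rcases n with _ | _ | _ | _ | m
  · norm_num
    rw [chiZv_zero, mul_one]
  · norm_num
    have hY := chiY_one_mul' (2*t+1) (2*(t+1)) (2*(t+1)+1) (by omega) (by omega)
    rw [chiZv_zero, show 2*(t+1)-1 = 2*t+1 by omega]
    linear_combination (-(chiZv 1)) * hY
  · norm_num
    have hY2 := chiY_one_mul' (2*(t+1)) (2*(t+1)+1) (2*(t+1)+2) (by omega) (by omega)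
    have hY1 := chiY_one_mul' (2*t+1) (2*(t+1)) (2*(t+1)+1) (by omega) (by omega)
    have hY0 := chiY_one_mul' (2*t) (2*t+1) (2*(t+1)) (by omega) (by omega)
    have hZ1 := chiZv_one_mul' 0 1 2 (by omega) (by omega)
    rw [chiZv_zero] at hZ1 ⊢
    rw [hb2, show 2*(t+1)-2 = 2*t by omega]
    linear_combination (1 - chiZv 1 * chiZv 1) * hY2 - chiY (2*(t+1)+2) * hZ1
      + chiY 1 * hY1 + hY0
  · norm_num
    have hY3 := chiY_one_mul' (2*(t+1)+1) (2*(t+1)+2) (2*(t+1)+3) (by omega) (by omega)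
    have hY2 := chiY_one_mul' (2*(t+1)) (2*(t+1)+1) (2*(t+1)+2) (by omega) (by omega)
    have hZ2 := chiZv_one_mul' 1 2 3 (by omega) (by omega)
    have hZ1 := chiZv_one_mul' 0 1 2 (by omega) (by omega)
    rw [chiZv_zero] at hZ1 ⊢
    rw [hb2]
    linear_combination (chiZv 1 - chiZv 1 * chiZv 2) * hY3 + (chiY 1 * chiZv 1) * hY2
      - chiY (2*(t+1)+3) * hZ2 + (chiY (2*(t+1)+1) * chiZv 1) * hZ1
  · norm_num
    rw [if_neg (by omega), show m+1+1+1+1-2 = m+2 by omega, show m+1+1+1+1-3 = m+1 by omega,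
      show m+1+1+1+1-4 = m by omega, show m+1+1+1+1 = m+4 by omega,
      show m+1+1+1 = m+3 by omega, hb2]
    have hY3 := chiY_one_mul' (2*(t+1)+(m+2)) (2*(t+1)+(m+3)) (2*(t+1)+(m+4)) (by omega) (by omega)
    have hY2 := chiY_one_mul' (2*(t+1)+(m+1)) (2*(t+1)+(m+2)) (2*(t+1)+(m+3)) (by omega) (by omega)
    have hY1 := chiY_one_mul' (2*(t+1)+m) (2*(t+1)+(m+1)) (2*(t+1)+(m+2)) (by omega) (by omega)
    have hZ3 := chiZv_one_mul' (m+2) (m+3) (m+4) (by omega) (by omega)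
    have hZ2 := chiZv_one_mul' (m+1) (m+2) (m+3) (by omega) (by omega)
    have hZ1 := chiZv_one_mul' m (m+1) (m+2) (by omega) (by omega)
    linear_combination (chiZv (m+2) - chiZv 1 * chiZv (m+3)) * hY3
      + (chiY 1 * chiZv (m+2)) * hY2 + (chiZv (m+2) - chiZv 1 * chiZv (m+1)) * hY1
      - chiY (2*(t+1)+(m+4)) * hZ3 + (chiZv 1 * chiY (2*(t+1)+(m+2))) * hZ2
      - chiY (2*(t+1)+m) * hZ1
end

section
/- For every natural number s ≥ 1, in ℤ[x,x⁻¹][[q]] one has (1 − q)(1 − qx)(1 − qx⁻¹) · ∑_{σ=0}^{∞} q^σ ∑_{k=0}^{σ} χ_{s+k}(x) = χ_s(x) − q χ_{s−1}(x). (Character form of the branching rule: the so(2,4) spin-s singleton D(s+1;(s,s)) restricts to the single so(2,3) massless spin-s module D(s+1;(s)).) -/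
/-- The so(3) character `χ_n(x) = ∑_{k=0}^n x^{n-2k}` in ℤ[x,x⁻¹]. -/
noncomputable def chi (n : ℕ) : LaurentPolynomial ℤ :=
  ∑ k ∈ Finset.range (n + 1), LaurentPolynomial.T ((n : ℤ) - 2 * k)

open PowerSeries LaurentPolynomial

lemma chi_rec (m : ℕ) : (T 1 + T (-1)) * chi (m+1) = chi (m+2) + chi m := by
  unfold chi
  rw [add_mul, Finset.mul_sum, Finset.mul_sum]
  have h1 : ∀ k ∈ Finset.range (m+2), (T 1 : LaurentPolynomial ℤ) * T ((m+1:ℕ) - 2*k)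
      = T (((m+2:ℕ) : ℤ) - 2*k) := by
    intro k _
    rw [← T_add]; push_cast; ring_nf
  have h2 : ∀ k ∈ Finset.range (m+2), (T (-1) : LaurentPolynomial ℤ) * T ((m+1:ℕ) - 2*k)
      = T (((m:ℕ) : ℤ) - 2*k) := by
    intro k _
    rw [← T_add]; push_cast; ring_nf
  rw [Finset.sum_congr rfl h1, Finset.sum_congr rfl h2]
  rw [show m+2+1 = (m+2)+1 from rfl, Finset.sum_range_succ (n := m+2),
    show m+1+1 = (m+1)+1 from rfl, Finset.sum_range_succ (n := m+1) (f := fun k => T (((m:ℕ):ℤ) - 2*k))]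
  have e : ((m+1+1 : ℕ) : ℤ) - 2*((m+1+1 : ℕ) : ℤ) = ((m:ℕ):ℤ) - 2*((m+1:ℕ):ℤ) := by
    push_cast; ring
  rw [e]; ring

/-- Branching of the so(2,4) spin-s singleton onto so(2,3), in character form:
`(1-q)(1-qx)(1-qx⁻¹) · ∑_{σ≥0} q^σ ∑_{k=0}^{σ} χ_{s+k}(x) = χ_s(x) - q χ_{s-1}(x)`. -/
theorem singleton_branching (s : ℕ) (hs : 1 ≤ s) :
    (1 - PowerSeries.X) *
      (1 - PowerSeries.C (R := LaurentPolynomial ℤ) (LaurentPolynomial.T 1) * PowerSeries.X) *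
      (1 - PowerSeries.C (R := LaurentPolynomial ℤ) (LaurentPolynomial.T (-1)) * PowerSeries.X) *
      PowerSeries.mk (fun σ => ∑ k ∈ Finset.range (σ + 1), chi (s + k)) =
    PowerSeries.C (R := LaurentPolynomial ℤ) (chi s) -
      PowerSeries.C (R := LaurentPolynomial ℤ) (chi (s - 1)) * PowerSeries.X := by
  set R := LaurentPolynomial ℤ
  set F := PowerSeries.mk (fun σ => ∑ k ∈ Finset.range (σ + 1), chi (s + k)) with hF
  set G := PowerSeries.mk (fun σ => chi (s + σ)) with hG
  have h1 : (1 - PowerSeries.X) * F = G := by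
    apply PowerSeries.ext
    intro n
    rw [sub_mul, one_mul, map_sub]
    cases n with
    | zero => simp [hF, hG]
    | succ n =>
      rw [coeff_succ_X_mul, hF, hG, coeff_mk, coeff_mk, coeff_mk, Finset.sum_range_succ,
        Nat.add_comm n 1]
      ring
  have hprod : (1 - PowerSeries.C (R := R) (T 1) * PowerSeries.X) *
      (1 - PowerSeries.C (R := R) (T (-1)) * PowerSeries.X) =
      1 - PowerSeries.C (R := R) (T 1 + T (-1)) * PowerSeries.X + PowerSeries.X ^ 2 := by
    have hT : (PowerSeries.C (R := R) (T 1)) * (PowerSeries.C (R := R) (T (-1))) = 1 := by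
      rw [← map_mul, ← T_add]; norm_num
    rw [map_add]
    linear_combination PowerSeries.X ^ 2 * hT
  have h2 : (1 - PowerSeries.C (R := R) (T 1 + T (-1)) * PowerSeries.X + PowerSeries.X ^ 2) * G =
      PowerSeries.C (R := R) (chi s) - PowerSeries.C (R := R) (chi (s - 1)) * PowerSeries.X := by
    obtain ⟨m, rfl⟩ : ∃ m, s = m + 1 := ⟨s - 1, (Nat.succ_pred_eq_of_pos hs).symm⟩
    apply PowerSeries.ext
    intro n
    rw [add_mul, sub_mul, one_mul, map_add, map_sub, map_sub]
    have hX2 : PowerSeries.X ^ 2 * G = PowerSeries.X * (PowerSeries.X * G) := by ring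
    rw [hX2, mul_assoc, coeff_C_mul]
    match n with
    | 0 => simp [hG]
    | 1 =>
      rw [coeff_succ_X_mul, coeff_succ_X_mul, coeff_zero_X_mul, hG, coeff_mk, coeff_mk]
      have := chi_rec m
      simp only [PowerSeries.coeff_C, PowerSeries.coeff_X, coeff_C_mul]
      norm_num
      rw [show m + 1 + 1 = m + 2 from rfl, this]
      ring
    | (n+2) =>
      rw [coeff_succ_X_mul, coeff_succ_X_mul, coeff_succ_X_mul, hG, coeff_mk, coeff_mk, coeff_mk]
      have := chi_rec (m + 1 + n)
      simp only [PowerSeries.coeff_C, PowerSeries.coeff_X, coeff_C_mul]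
      norm_num
      rw [show m + 1 + (n+2) = (m+1+n) + 2 by ring, show m+1+(n+1) = (m+1+n)+1 by ring, this]
      have : ¬ (2 + n = 1) := by omega
      simp [this]
  calc (1 - PowerSeries.X) * (1 - PowerSeries.C (R := R) (T 1) * PowerSeries.X) *
      (1 - PowerSeries.C (R := R) (T (-1)) * PowerSeries.X) * F
      = (1 - PowerSeries.C (R := R) (T 1) * PowerSeries.X) *
        (1 - PowerSeries.C (R := R) (T (-1)) * PowerSeries.X) * ((1 - PowerSeries.X) * F) := by ring
    _ = (1 - PowerSeries.C (R := R) (T 1 + T (-1)) * PowerSeries.X + PowerSeries.X ^ 2) * G := by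
        rw [h1, hprod]
    _ = _ := h2
end
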